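/- For every n ≥ 2, the antisymmetrizer s = Σ_{σ ∈ S_n} sgn(σ)·x_{σ(1)} x_{σ(2)} ⋯ x_{σ(n)} does not lie in L_3(A_n); equivalently, the subspace of multilinear elements of A_n transforming by the sign representation of S_n intersects L_3 trivially. -/
import Mathlib


/-- The lower central series of the free algebra `A_n = FreeAlgebra ℂ (Fin n)`,
as a chain of `ℂ`-subspaces: `lcs n 1 = A`, `lcs n (m+1) = span {[a,w] : a ∈ A, w ∈ lcs n m}`.
(The value at `0` is junk, set to `⊤`.) -/
def lcs (n : ℕ) : ℕ → Submodule ℂ (FreeAlgebra ℂ (Fin n))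
  | 0 => ⊤
  | 1 => ⊤
  | m + 2 => Submodule.span ℂ
      {y | ∃ a w, w ∈ lcs n (m + 1) ∧ y = a * w - w * a}

/-- For `g ∈ A` and a `ℂ`-subspace `V ⊆ A`, `[g, V] = span {[g,w] : w ∈ V}`. -/
def brS {n : ℕ} (g : FreeAlgebra ℂ (Fin n)) (V : Submodule ℂ (FreeAlgebra ℂ (Fin n))) :
    Submodule ℂ (FreeAlgebra ℂ (Fin n)) :=
  Submodule.span ℂ {y | ∃ w ∈ V, y = g * w - w * g}
open CliffordAlgebra ExteriorAlgebra

section Lemmas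
variable {M : Type*} [AddCommGroup M] [Module ℂ M]

private lemma ext_ι_mul (v : M) (x : ExteriorAlgebra ℂ M) :
    ι ℂ v * x = involute x * ι ℂ v := by
  induction x using CliffordAlgebra.induction with
  | algebraMap r => rw [AlgHom.commutes]; exact (Algebra.commutes r _).symm
  | ι w =>
      rw [involute_ι, neg_mul, eq_neg_iff_add_eq_zero]
      exact ι_add_mul_swap v w
  | mul x y hx hy => rw [← mul_assoc, hx, mul_assoc, hy, ← mul_assoc, map_mul]
  | add x y hx hy => rw [mul_add, hx, hy, map_add, add_mul]

private lemma even_central {x : ExteriorAlgebra ℂ M}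
    (hx : x ∈ evenOdd (0 : QuadraticForm ℂ M) 0) (y : ExteriorAlgebra ℂ M) :
    x * y = y * x := by
  induction x, hx using even_induction with
  | algebraMap r => exact Algebra.commutes r y
  | add a b ha hb iha ihb => rw [add_mul, mul_add, iha, ihb]
  | ι_mul_ι_mul m₁ m₂ a ha ih =>
      have h : ι ℂ m₁ * ι ℂ m₂ * y = y * (ι ℂ m₁ * ι ℂ m₂) := by
        rw [mul_assoc, ext_ι_mul m₂ y, ← mul_assoc, ext_ι_mul m₁ (involute y),
          involute_involute, mul_assoc]
      rw [mul_assoc, ih, ← mul_assoc, h, mul_assoc]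

private lemma comm_even (a b : ExteriorAlgebra ℂ M) :
    a * b - b * a ∈ evenOdd (0 : QuadraticForm ℂ M) 0 := by
  have htop : (evenOdd (0 : QuadraticForm ℂ M) 0 ⊔ evenOdd (0 : QuadraticForm ℂ M) 1) = ⊤ :=
    (evenOdd_isCompl (0 : QuadraticForm ℂ M)).codisjoint.eq_top
  obtain ⟨a₀, ha₀, a₁, ha₁, rfl⟩ := Submodule.mem_sup.mp (htop ▸ Submodule.mem_top (x := a))
  obtain ⟨b₀, hb₀, b₁, hb₁, rfl⟩ := Submodule.mem_sup.mp (htop ▸ Submodule.mem_top (x := b))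
  have key : (a₀ + a₁) * (b₀ + b₁) - (b₀ + b₁) * (a₀ + a₁) = a₁ * b₁ - b₁ * a₁ := by
    simp only [mul_add, add_mul]
    rw [even_central ha₀ b₀, even_central ha₀ b₁, ← even_central hb₀ a₁]
    abel
  rw [key]
  have h1 : a₁ * b₁ ∈ evenOdd (0 : QuadraticForm ℂ M) 0 := by
    have := SetLike.mul_mem_graded ha₁ hb₁
    rwa [show ((1 : ZMod 2) + 1) = 0 from rfl] at this
  have h2 : b₁ * a₁ ∈ evenOdd (0 : QuadraticForm ℂ M) 0 := by
    have := SetLike.mul_mem_graded hb₁ ha₁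
    rwa [show ((1 : ZMod 2) + 1) = 0 from rfl] at this
  exact Submodule.sub_mem _ h1 h2

private lemma central_comm (a b y : ExteriorAlgebra ℂ M) :
    (a * b - b * a) * y = y * (a * b - b * a) :=
  even_central (comm_even a b) y

end Lemmas


theorem stmt_18 (n : ℕ) (hn : 2 ≤ n) :
    (∑ σ : Equiv.Perm (Fin n),
        ((Equiv.Perm.sign σ : ℤ) : ℂ) •
          (List.ofFn fun i : Fin n => FreeAlgebra.ι ℂ (σ i)).prod)
      ∉ lcs n 3 := by
  set e : Fin n → (Fin n → ℂ) := fun i => Pi.single i 1 with he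
  set φ : FreeAlgebra ℂ (Fin n) →ₐ[ℂ] ExteriorAlgebra ℂ (Fin n → ℂ) :=
    FreeAlgebra.lift ℂ (fun i => ι ℂ (e i)) with hφ
  -- φ kills lcs n 3
  have h2 : ∀ w ∈ lcs n 2, ∀ g : ExteriorAlgebra ℂ (Fin n → ℂ), φ w * g = g * φ w := by
    intro w hw g
    have hw' : w ∈ Submodule.span ℂ
        {y : FreeAlgebra ℂ (Fin n) | ∃ a u, u ∈ lcs n 1 ∧ y = a * u - u * a} := hw
    clear hw
    induction hw' using Submodule.span_induction with
    | mem y hy =>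
        obtain ⟨a, u, -, rfl⟩ := hy
        simpa [map_sub, map_mul] using central_comm (φ a) (φ u) g
    | zero => simp
    | add x y hx hy ihx ihy => simp [map_add, add_mul, mul_add, ihx, ihy]
    | smul c x hx ihx => simp [map_smul, smul_mul_assoc, mul_smul_comm, ihx]
  have hker : ∀ x ∈ lcs n 3, φ x = 0 := by
    intro x hx
    have hx' : x ∈ Submodule.span ℂ
        {y : FreeAlgebra ℂ (Fin n) | ∃ a w, w ∈ lcs n 2 ∧ y = a * w - w * a} := hx
    clear hx
    induction hx' using Submodule.span_induction with
    | mem y hy =>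
        obtain ⟨a, w, hw, rfl⟩ := hy
        rw [map_sub, map_mul, map_mul, h2 w hw (φ a), sub_self]
    | zero => simp
    | add x y hx hy ihx ihy => rw [map_add, ihx, ihy, add_zero]
    | smul c x hx ihx => rw [map_smul, ihx, smul_zero]
  -- the linear functional
  set F : ExteriorAlgebra ℂ (Fin n → ℂ) →ₗ[ℂ] ℂ :=
    liftAlternating (Pi.single n Matrix.detRowAlternating) with hF
  -- value of φ on each monomial
  have hmono : ∀ σ : Equiv.Perm (Fin n),
      φ ((List.ofFn fun i : Fin n => FreeAlgebra.ι ℂ (σ i)).prod)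
        = ιMulti ℂ n (e ∘ σ) := by
    intro σ
    rw [map_list_prod, List.map_ofFn,
      show (⇑φ ∘ fun i : Fin n => FreeAlgebra.ι ℂ (σ i))
          = fun i : Fin n => ι ℂ ((e ∘ σ) i) from funext fun i => by simp [hφ]]
    exact (ιMulti_apply _).symm
  have hdet : Matrix.detRowAlternating (R := ℂ) (n := Fin n) e = 1 := by
    have h1 : (Matrix.of e) = (1 : Matrix (Fin n) (Fin n) ℂ) := by
      funext i j
      simp [he, Matrix.one_apply, Pi.single_apply, eq_comm]
    show Matrix.det (Matrix.of e) = 1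
    rw [h1, Matrix.det_one]
  have hterm : ∀ σ : Equiv.Perm (Fin n),
      ((Equiv.Perm.sign σ : ℤ) : ℂ) • F (ιMulti ℂ n (e ∘ σ)) = 1 := by
    intro σ
    have hp := AlternatingMap.map_perm (ιMulti ℂ n) e σ
    have hFι : F (ιMulti ℂ n e) = 1 := by
      rw [hF, liftAlternating_apply_ιMulti, Pi.single_eq_same, hdet]
    rcases Int.units_eq_one_or (Equiv.Perm.sign σ) with h | h <;>
      simp [hp, h, hFι, Units.smul_def]
  intro hmem
  have h0 : F (φ (∑ σ : Equiv.Perm (Fin n),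
      ((Equiv.Perm.sign σ : ℤ) : ℂ) •
        (List.ofFn fun i : Fin n => FreeAlgebra.ι ℂ (σ i)).prod)) = 0 := by
    rw [hker _ hmem, map_zero]
  rw [map_sum, map_sum] at h0
  simp only [map_smul, hmono] at h0
  rw [Finset.sum_congr rfl fun σ _ => hterm σ] at h0
  simp only [Finset.sum_const, Finset.card_univ, nsmul_eq_mul, mul_one] at h0
  exact ((Nat.cast_ne_zero (R := ℂ)).mpr Fintype.card_ne_zero) h0
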